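/- Let C be a modular fusion category with S-matrix (S_{ij}), simple objects X_0,...,X_m with quantum dimensions d_i, and suppose C is generated by a simple object X = X_k. Using the identification of characters μ_i([X_j]) = S_{ij}/d_i and dim(C^i) = d_i², the identity dim(C)/|G| = Σ_{orbit reps i} d_i² |μ_i([X])|² transforms into dim(C)/(|G| · d_k²) = Σ_{orbit reps i} |μ_{X}([X_i])|², where μ_X([X_i]) = S_{ki}/d_k; hence dim(C)/(|U(C)| · dim(X)²) is an algebraic integer. -/

import Mathlib

open scoped BigOperators

/-- A commutative fusion ring: nonnegative integer fusion coefficients on a basis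
`x_0, ..., x_m` (`x_0` the unit), a duality involution, and Frobenius-Perron
dimensions `d i > 0`. -/
structure FusionData (m : ℕ) where
  N : Fin (m + 1) → Fin (m + 1) → Fin (m + 1) → ℕ
  dual : Fin (m + 1) → Fin (m + 1)
  dual_invol : ∀ i, dual (dual i) = i
  N_comm : ∀ i j k, N i j k = N j i k
  N_assoc : ∀ i j l k, ∑ t, N i j t * N t l k = ∑ t, N j l t * N i t k
  N_one : ∀ j k, N 0 j k = if k = j then 1 else 0
  N_pair : ∀ i j, N i j 0 = if j = dual i then 1 else 0
  d : Fin (m + 1) → ℝ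
  d_pos : ∀ i, 0 < d i
  d_one : d 0 = 1
  d_mul : ∀ i j, d i * d j = ∑ k, (N i j k : ℝ) * d k
  d_dual : ∀ i, d (dual i) = d i

/-- A character of the complexified fusion ring, given by its values on the basis. -/
def IsChar {m : ℕ} (F : FusionData m) (μ : Fin (m + 1) → ℂ) : Prop :=
  μ 0 = 1 ∧
  (∀ i j, μ i * μ j = ∑ k, (F.N i j k : ℂ) * μ k) ∧
  (∀ i, μ (F.dual i) = starRingEnd ℂ (μ i)) ∧
  (∀ i, ‖μ i‖ ≤ F.d i)

/-- The dual `⋆` product: `(μ ⋆ ν)(x_k / d_k) = μ(x_k / d_k) · ν(x_k / d_k)`. -/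
noncomputable def starProd {m : ℕ} (F : FusionData m) (μ ν : Fin (m + 1) → ℂ) :
    Fin (m + 1) → ℂ :=
  fun i => μ i * ν i / (F.d i : ℂ)

/-- A group-like character: `μ ⋆ μ# = μ_0 = FPdim`, where `μ#` is the complex
conjugate character. -/
def IsGroupLike {m : ℕ} (F : FusionData m) (μ : Fin (m + 1) → ℂ) : Prop :=
  IsChar F μ ∧ ∀ i, starProd F μ (fun k => starRingEnd ℂ (μ k)) i = (F.d i : ℂ)

/-- The coefficient of the basis element `x_k` in the `n`-th power of `x_a`. -/
def powCoeff {m : ℕ} (F : FusionData m) (a : Fin (m + 1)) : ℕ → Fin (m + 1) → ℕ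
  | 0, k => if k = 0 then 1 else 0
  | n + 1, k => ∑ l, powCoeff F a n l * F.N a l k

namespace Aux

variable {m : ℕ} (F : FusionData m)

lemma d_ne (i : Fin (m + 1)) : (F.d i : ℂ) ≠ 0 := by
  exact_mod_cast Complex.ofReal_ne_zero.mpr (F.d_pos i).ne'

lemma char_pow {ν : Fin (m + 1) → ℂ} (hν : IsChar F ν) (a : Fin (m + 1)) :
    ∀ n, (ν a) ^ n = ∑ l, (powCoeff F a n l : ℂ) * ν l := by
  intro n
  induction n with
  | zero => simp [powCoeff, hν.1]
  | succ n ih =>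
      rw [pow_succ, ih, Finset.sum_mul]
      have : ∀ l, (powCoeff F a n l : ℂ) * ν l * ν a
          = ∑ r, (powCoeff F a n l : ℂ) * ((F.N a l r : ℂ) * ν r) := by
        intro l
        rw [mul_assoc, mul_comm (ν l) (ν a), hν.2.1 a l, Finset.mul_sum]
      rw [Finset.sum_congr rfl fun l _ => this l, Finset.sum_comm]
      refine Finset.sum_congr rfl fun r _ => ?_
      simp only [powCoeff]
      push_cast
      rw [Finset.sum_mul]
      exact Finset.sum_congr rfl fun l _ => by ring

lemma d_pow (a : Fin (m + 1)) :
    ∀ n, (F.d a) ^ n = ∑ l, (powCoeff F a n l : ℝ) * F.d l := by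
  intro n
  induction n with
  | zero => simp [powCoeff, F.d_one]
  | succ n ih =>
      rw [pow_succ, ih, Finset.sum_mul]
      have : ∀ l, (powCoeff F a n l : ℝ) * F.d l * F.d a
          = ∑ r, (powCoeff F a n l : ℝ) * ((F.N a l r : ℝ) * F.d r) := by
        intro l
        rw [mul_assoc, mul_comm (F.d l) (F.d a), F.d_mul a l, Finset.mul_sum]
      rw [Finset.sum_congr rfl fun l _ => this l, Finset.sum_comm]
      refine Finset.sum_congr rfl fun r _ => ?_
      simp only [powCoeff]
      push_cast
      rw [Finset.sum_mul]
      exact Finset.sum_congr rfl fun l _ => by ring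

lemma gl_normSq {z : Fin (m + 1) → ℂ} (hz : IsGroupLike F z) (i : Fin (m + 1)) :
    Complex.normSq (z i) = (F.d i) ^ 2 := by
  have h := hz.2 i
  simp only [starProd] at h
  have h2 : z i * starRingEnd ℂ (z i) = (F.d i : ℂ) * (F.d i : ℂ) := by
    rw [div_eq_iff (d_ne F i)] at h
    rw [h]
  have := Complex.mul_conj (z i)
  rw [this] at h2
  have : (Complex.normSq (z i) : ℂ) = ((F.d i ^ 2 : ℝ) : ℂ) := by
    rw [h2]; push_cast; ring
  exact_mod_cast this

lemma gl_abs {z : Fin (m + 1) → ℂ} (hz : IsGroupLike F z) (i : Fin (m + 1)) :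
    ‖z i‖ = F.d i := by
  have h := gl_normSq F hz i
  rw [← Complex.sq_norm] at h
  have h1 : (0:ℝ) ≤ ‖z i‖ := norm_nonneg _
  nlinarith [ (F.d_pos i) ]

lemma gl_ne {z : Fin (m + 1) → ℂ} (hz : IsGroupLike F z) (i : Fin (m + 1)) :
    z i ≠ 0 := by
  intro h
  have := gl_abs F hz i
  rw [h] at this
  simp at this
  exact (F.d_pos i).ne this

lemma re_eq_abs {w : ℂ} (h : w.re = ‖w‖) : w = (w.re : ℂ) := by
  have h2 : Complex.normSq w = w.re ^ 2 := by
    rw [← Complex.sq_norm, ← h]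
  have him : w.im = 0 := by
    have := Complex.normSq_apply w
    nlinarith [this]
  exact Complex.ext rfl him

lemma align {z : Fin (m + 1) → ℂ} (habs : ∀ l, ‖z l‖ = F.d l)
    (c : Fin (m + 1) → ℕ) (v : ℂ) (hv : ‖v‖ = 1)
    (hsum : ∑ l, (c l : ℂ) * z l = v * ((∑ l, (c l : ℝ) * F.d l : ℝ) : ℂ)) :
    ∀ l, c l ≠ 0 → z l = v * (F.d l : ℂ) := by
  have hvne : v ≠ 0 := by
    intro h; rw [h] at hv; simp at hv
  have hvc : starRingEnd ℂ v * v = 1 := by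
    rw [mul_comm, Complex.mul_conj]
    rw [← Complex.sq_norm, hv]; norm_num
  set w : Fin (m + 1) → ℂ := fun l => starRingEnd ℂ v * z l with hw
  have hwabs : ∀ l, ‖w l‖ = F.d l := by
    intro l; rw [hw]; simp [norm_mul, Complex.norm_conj, hv, habs l]
  have hwsum : ∑ l, (c l : ℂ) * w l = ((∑ l, (c l : ℝ) * F.d l : ℝ) : ℂ) := by
    have : ∑ l, (c l : ℂ) * w l = starRingEnd ℂ v * ∑ l, (c l : ℂ) * z l := by
      rw [Finset.mul_sum]; exact Finset.sum_congr rfl fun l _ => by rw [hw]; ring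
    rw [this, hsum, ← mul_assoc, hvc, one_mul]
  have hre : ∑ l, (c l : ℝ) * (w l).re = ∑ l, (c l : ℝ) * F.d l := by
    have := congrArg Complex.re hwsum
    simpa [Complex.re_sum] using this
  have hle : ∀ l ∈ Finset.univ, (c l : ℝ) * (w l).re ≤ (c l : ℝ) * F.d l := by
    intro l _
    have : (w l).re ≤ F.d l := by
      calc (w l).re ≤ ‖w l‖ := Complex.re_le_norm _
        _ = F.d l := hwabs l
    exact mul_le_mul_of_nonneg_left this (Nat.cast_nonneg _)
  have heach := (Finset.sum_eq_sum_iff_of_le hle).1 hre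
  intro l hl
  have h1 : (c l : ℝ) * (w l).re = (c l : ℝ) * F.d l :=
    heach l (Finset.mem_univ l)
  have hcl : (c l : ℝ) ≠ 0 := Nat.cast_ne_zero.mpr hl
  have h2 : (w l).re = F.d l := by
    have := mul_left_cancel₀ hcl h1
    exact this
  have h3 : w l = ((w l).re : ℂ) := by
    apply re_eq_abs
    rw [h2, hwabs l]
  have h4 : w l = (F.d l : ℂ) := by rw [h3, h2]
  have h5 : starRingEnd ℂ v * z l = starRingEnd ℂ v * (v * (F.d l : ℂ)) := by
    have : starRingEnd ℂ v * z l = w l := rfl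
    rw [this, h4, ← mul_assoc, hvc, one_mul]
  have hvcne : starRingEnd ℂ v ≠ 0 := by
    simpa using hvne
  exact mul_left_cancel₀ hvcne h5


lemma gl_grade {z : Fin (m + 1) → ℂ} (hz : IsGroupLike F z) {i j l : Fin (m + 1)}
    (hN : F.N i j l ≠ 0) :
    z l * ((F.d i : ℂ) * (F.d j : ℂ)) = z i * z j * (F.d l : ℂ) := by
  set v : ℂ := z i * z j / ((F.d i : ℂ) * (F.d j : ℂ)) with hv
  have hdij : ((F.d i : ℂ) * (F.d j : ℂ)) ≠ 0 := mul_ne_zero (d_ne F i) (d_ne F j)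
  have hvabs : ‖v‖ = 1 := by
    rw [hv, norm_div, norm_mul, norm_mul, gl_abs F hz i, gl_abs F hz j]
    simp only [Complex.norm_real, Real.norm_eq_abs, abs_of_pos (F.d_pos i), abs_of_pos (F.d_pos j)]
    exact div_self (mul_pos (F.d_pos i) (F.d_pos j)).ne'
  have hsum : ∑ r, (F.N i j r : ℂ) * z r
      = v * ((∑ r, (F.N i j r : ℝ) * F.d r : ℝ) : ℂ) := by
    rw [← hz.1.2.1 i j, ← F.d_mul i j, hv]
    push_cast
    field_simp
    rw [eq_div_iff hdij]; ring
  have := align F (gl_abs F hz) (F.N i j) v hvabs hsum l hN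
  rw [this, hv]
  field_simp
  rw [div_eq_iff hdij]; ring

lemma gl_pow {z : Fin (m + 1) → ℂ} (hz : IsGroupLike F z) (k : Fin (m + 1))
    {i : Fin (m + 1)} {n : ℕ} (hP : powCoeff F k n i ≠ 0) :
    z i * (F.d k : ℂ) ^ n = (z k) ^ n * (F.d i : ℂ) := by
  set v : ℂ := (z k / (F.d k : ℂ)) ^ n with hv
  have hvabs : ‖v‖ = 1 := by
    rw [hv, norm_pow, norm_div, gl_abs F hz k]
    simp only [Complex.norm_real, Real.norm_eq_abs, abs_of_pos (F.d_pos k)]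
    rw [div_self (F.d_pos k).ne', one_pow]
  have hsum : ∑ l, (powCoeff F k n l : ℂ) * z l
      = v * ((∑ l, (powCoeff F k n l : ℝ) * F.d l : ℝ) : ℂ) := by
    rw [← char_pow F hz.1 k n, ← d_pow F k n, hv, div_pow]
    push_cast
    exact (div_mul_cancel₀ _ (pow_ne_zero _ (d_ne F k))).symm
  have := align F (gl_abs F hz) (powCoeff F k n) v hvabs hsum i hP
  rw [this, hv, div_pow, div_mul_eq_mul_div,
    div_mul_cancel₀ _ (pow_ne_zero _ (d_ne F k))]

lemma gl_ext {z z' : Fin (m + 1) → ℂ} (hz : IsGroupLike F z)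
    (hz' : IsGroupLike F z') (k : Fin (m + 1))
    (hgen : ∀ i, ∃ n, powCoeff F k n i ≠ 0) (hk : z k = z' k) : z = z' := by
  funext i
  obtain ⟨n, hn⟩ := hgen i
  have h1 := gl_pow F hz k hn
  have h2 := gl_pow F hz' k hn
  rw [hk] at h1
  have hdk : ((F.d k : ℂ)) ^ n ≠ 0 := pow_ne_zero _ (d_ne F k)
  have := h1.trans h2.symm
  exact mul_right_cancel₀ hdk this

lemma star_char {z ν : Fin (m + 1) → ℂ} (hz : IsGroupLike F z)
    (hν : IsChar F ν) : IsChar F (starProd F z ν) := by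
  refine ⟨?_, ?_, ?_, ?_⟩
  · simp [starProd, hz.1.1, hν.1, F.d_one]
  · intro i j
    simp only [starProd]
    have : z i * ν i / (F.d i : ℂ) * (z j * ν j / (F.d j : ℂ))
        = (z i * z j) * (ν i * ν j) / ((F.d i : ℂ) * (F.d j : ℂ)) := by ring
    rw [this, hν.2.1 i j, Finset.mul_sum, Finset.sum_div]
    refine Finset.sum_congr rfl fun l _ => ?_
    by_cases hN : F.N i j l = 0
    · simp [hN]
    · have hg := gl_grade F hz hN
      have hdij : ((F.d i : ℂ) * (F.d j : ℂ)) ≠ 0 := mul_ne_zero (d_ne F i) (d_ne F j)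
      have hdl := d_ne F l
      field_simp
      rw [div_eq_iff hdij]
      calc z i * z j * ν l * (F.d l : ℂ)
          = ν l * (z i * z j * (F.d l : ℂ)) := by ring
        _ = ν l * (z l * ((F.d i : ℂ) * (F.d j : ℂ))) := by rw [← hg]
        _ = ν l * z l * ((F.d i : ℂ) * (F.d j : ℂ)) := by ring
  · intro i
    simp only [starProd, F.d_dual i, hz.1.2.2.1 i, hν.2.2.1 i, map_div₀, map_mul]
    rw [Complex.conj_ofReal]
  · intro i
    simp only [starProd]
    rw [norm_div, norm_mul, gl_abs F hz i]
    simp only [Complex.norm_real, Real.norm_eq_abs, abs_of_pos (F.d_pos i)]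
    rw [mul_comm, mul_div_assoc, div_self (F.d_pos i).ne', mul_one]
    exact hν.2.2.2 i

end Aux

open Aux in
/-- A modular fusion category generated by a simple object `X = X_k`, modelled
by its Grothendieck ring `F`, quantum dimensions `dims`, and symmetric
`S`-matrix, with characters `μ_j([X_i]) = S_{ij}/d_j` and
`dim C^j = d_j² = dim C / n_j`.  Then the orbit-sum identity
`dim C/|G| = ∑ d_i² |μ_i([X])|²` over non-vanishing orbit representatives
transforms into `dim C/(|G| d_k²) = ∑ |μ_X([X_i])|²` with
`μ_X([X_i]) = S_{ki}/d_k` algebraic integers; hence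
`dim C/(|U(C)|·dim(X)²)` is an algebraic integer. -/
theorem modular_divisibility {m : ℕ} (F : FusionData m)
    (μ : Fin (m + 1) → Fin (m + 1) → ℂ)
    (hchar : ∀ j, IsChar F (μ j)) (hinj : Function.Injective μ)
    (hall : ∀ ν, IsChar F ν → ∃ j, μ j = ν)
    (h0 : μ 0 = fun i => (F.d i : ℂ))
    (dims : Fin (m + 1) → ℂ) (hd0 : dims 0 = 1)
    (hdmul : ∀ i j, dims i * dims j = ∑ k, (F.N i j k : ℂ) * dims k)
    (hddual : ∀ i, dims (F.dual i) = dims i) (hdne : ∀ i, dims i ≠ 0)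
    (Smat : Fin (m + 1) → Fin (m + 1) → ℂ)
    (hSsymm : ∀ i j, Smat i j = Smat j i)
    (hEval : ∀ i j, μ j i = Smat i j / dims j)
    (hclassdim : ∀ j, ((∑ i, Complex.normSq (μ j i) : ℝ) : ℂ) * dims j ^ 2
      = ∑ i, dims i ^ 2)
    (k : Fin (m + 1)) (hgen : ∀ i, ∃ n, powCoeff F k n i ≠ 0)
    (hSint : ∀ i, IsIntegral ℤ (Smat k i / dims k))
    (T : Finset (Fin (m + 1))) (hTnv : ∀ t ∈ T, μ t k ≠ 0)
    (hTrep : ∀ j, μ j k ≠ 0 →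
      ∃! t, t ∈ T ∧ ∃ z, IsGroupLike F z ∧ starProd F z (μ t) = μ j) :
    ((∑ i, dims i ^ 2) /
        ((Nat.card {j : Fin (m + 1) // IsGroupLike F (μ j)} : ℂ) * dims k ^ 2)
      = ∑ t ∈ T, (Smat k t / dims k) * starRingEnd ℂ (Smat k t / dims k)) ∧
    IsIntegral ℤ ((∑ i, dims i ^ 2) /
      ((Nat.card {j : Fin (m + 1) // IsGroupLike F (μ j)} : ℂ) * dims k ^ 2)) := by
  classical
  set nfun : Fin (m + 1) → ℝ := fun j => ∑ i, Complex.normSq (μ j i) with hnfun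
  have hn_pos : ∀ j, 0 < nfun j := by
    intro j
    have h1 : Complex.normSq (μ j 0) = 1 := by
      have := (hchar j).1; rw [this]; simp
    have h2 : (1:ℝ) ≤ nfun j := by
      rw [hnfun]
      calc (1:ℝ) = Complex.normSq (μ j 0) := h1.symm
        _ ≤ ∑ i, Complex.normSq (μ j i) :=
            Finset.single_le_sum (fun i _ => Complex.normSq_nonneg _) (Finset.mem_univ 0)
    linarith
  set dimC : ℂ := ∑ i, dims i ^ 2 with hdimC
  have hcd : ∀ j, ((nfun j : ℝ) : ℂ) * dims j ^ 2 = dimC := hclassdim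
  have hdimne : dimC ≠ 0 := by
    rw [← hcd 0, hd0]
    simp only [one_pow, mul_one]
    exact_mod_cast (hn_pos 0).ne'
  have habsdim : ∀ j, Complex.normSq (dims j) * nfun j = ‖dimC‖ := by
    intro j
    have h1 : Complex.normSq ((nfun j : ℂ) * dims j ^ 2) = Complex.normSq dimC := by
      rw [hcd j]
    rw [map_mul, map_pow, Complex.normSq_ofReal] at h1
    have h2 : (Complex.normSq (dims j) * nfun j) ^ 2 = (‖dimC‖) ^ 2 := by
      rw [Complex.sq_norm, ← h1]; ring
    have h3 : 0 ≤ Complex.normSq (dims j) * nfun j :=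
      mul_nonneg (Complex.normSq_nonneg _) (hn_pos j).le
    nlinarith [norm_nonneg dimC]
  have habsdim_pos : 0 < ‖dimC‖ := by
    simpa using norm_pos_iff.mpr hdimne
  -- transfer lemma
  have htrans : ∀ i j, Complex.normSq (μ i j) * nfun j = Complex.normSq (μ j i) * nfun i := by
    intro i j
    have h1 : μ i j * dims i = μ j i * dims j := by
      rw [hEval j i, hEval i j, div_mul_cancel₀ _ (hdne i), div_mul_cancel₀ _ (hdne j),
        hSsymm]
    have h2 : Complex.normSq (μ i j) * Complex.normSq (dims i)
        = Complex.normSq (μ j i) * Complex.normSq (dims j) := by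
      rw [← map_mul, ← map_mul, h1]
    have h3 := habsdim i
    have h4 := habsdim j
    have h5 : (Complex.normSq (μ i j) * nfun j) * ‖dimC‖
        = (Complex.normSq (μ j i) * nfun i) * ‖dimC‖ := by
      calc (Complex.normSq (μ i j) * nfun j) * ‖dimC‖
          = (Complex.normSq (μ i j) * Complex.normSq (dims i)) * (nfun i * nfun j) := by
            rw [← h3]; ring
        _ = (Complex.normSq (μ j i) * Complex.normSq (dims j)) * (nfun i * nfun j) := by
            rw [h2]
        _ = (Complex.normSq (μ j i) * nfun i) * ‖dimC‖ := by
            rw [← h4]; ring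
    exact mul_right_cancel₀ habsdim_pos.ne' h5
  -- key identity 1
  have key1 : ∑ j, Complex.normSq (μ j k) / nfun j = 1 := by
    have : ∀ j, Complex.normSq (μ j k) / nfun j = Complex.normSq (μ k j) / nfun k := by
      intro j
      rw [div_eq_div_iff (hn_pos j).ne' (hn_pos k).ne']
      exact htrans j k
    rw [Finset.sum_congr rfl fun j _ => this j, ← Finset.sum_div]
    exact div_self (hn_pos k).ne'
  -- the group of group-likes
  set glS : Finset (Fin (m + 1)) := Finset.univ.filter (fun j => IsGroupLike F (μ j))
    with hglS
  set nG : ℕ := glS.card with hnG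
  have hcardG : (Nat.card {j : Fin (m + 1) // IsGroupLike F (μ j)}) = nG := by
    rw [Nat.card_eq_fintype_card, Fintype.card_subtype]
  have hgl0 : IsGroupLike F (μ 0) := by
    refine ⟨hchar 0, fun i => ?_⟩
    simp only [starProd, h0]
    rw [Complex.conj_ofReal, mul_div_assoc, div_self (d_ne F i), mul_one]
  have hnG_pos : 0 < nG := by
    rw [hnG]
    exact Finset.card_pos.mpr ⟨0, Finset.mem_filter.mpr ⟨Finset.mem_univ 0, hgl0⟩⟩
  -- the representative function
  set r : Fin (m + 1) → Fin (m + 1) := fun j =>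
    if h : μ j k ≠ 0 then (hTrep j h).choose else 0 with hr
  have rspec : ∀ j, μ j k ≠ 0 →
      (r j ∈ T ∧ ∃ z, IsGroupLike F z ∧ starProd F z (μ (r j)) = μ j) := by
    intro j h
    have : r j = (hTrep j h).choose := by rw [hr]; simp [h]
    rw [this]
    exact (hTrep j h).choose_spec.1
  have runiq : ∀ j (h : μ j k ≠ 0) (t : Fin (m + 1)), t ∈ T →
      (∃ z, IsGroupLike F z ∧ starProd F z (μ t) = μ j) → r j = t := by
    intro j h t ht hex
    have h1 : r j = (hTrep j h).choose := by rw [hr]; simp [h]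
    rw [h1]
    exact ((hTrep j h).choose_spec.2 t ⟨ht, hex⟩).symm
  set g : Fin (m + 1) → ℝ := fun j => Complex.normSq (μ j k) / nfun j with hg
  set A : Finset (Fin (m + 1)) := Finset.univ.filter (fun j => μ j k ≠ 0) with hA
  have h_total : ∑ j ∈ A, g j = 1 := by
    rw [← key1]
    apply Finset.sum_subset (Finset.subset_univ A)
    intro j _ hj
    rw [hA] at hj
    simp only [Finset.mem_filter, Finset.mem_univ, true_and, not_not] at hj
    rw [hg]
    simp [hj]
  have h_fiber : ∑ t ∈ T, ∑ j ∈ A.filter (fun j => r j = t), g j = ∑ j ∈ A, g j := by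
    apply Finset.sum_fiberwise_of_maps_to
    intro j hj
    rw [hA] at hj
    simp only [Finset.mem_filter, Finset.mem_univ, true_and] at hj
    exact (rspec j hj).1
  -- orbit invariance of normSq
  have horb : ∀ (z ν : Fin (m + 1) → ℂ), IsGroupLike F z →
      ∀ i, Complex.normSq (starProd F z ν i) = Complex.normSq (ν i) := by
    intro z ν hz i
    simp only [starProd]
    rw [map_div₀, map_mul, gl_normSq F hz i, Complex.normSq_ofReal]
    have hd := (F.d_pos i).ne'
    field_simp
  -- fibers: constant value and cardinality
  have hconst : ∀ t ∈ T, ∀ j ∈ A.filter (fun j => r j = t), g j = g t := by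
    intro t ht j hj
    simp only [Finset.mem_filter, hA, Finset.mem_univ, true_and] at hj
    obtain ⟨⟨hjk, hrj⟩⟩ := And.intro hj trivial
    obtain ⟨z, hz, hst⟩ := (rspec j hjk).2
    rw [hrj] at hst
    have hNS : ∀ i, Complex.normSq (μ j i) = Complex.normSq (μ t i) := by
      intro i
      rw [← hst]
      exact horb z (μ t) hz i
    rw [hg]
    simp only [hnfun]
    rw [hNS k, Finset.sum_congr rfl fun i _ => hNS i]
  have hcard : ∀ t ∈ T, (A.filter (fun j => r j = t)).card = nG := by
    intro t ht
    rw [hnG]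
    symm
    apply Finset.card_bij (fun j' hj' =>
      (hall _ (star_char F ((Finset.mem_filter.1 hj').2) (hchar t))).choose)
    · intro j' hj'
      have hgl : IsGroupLike F (μ j') := (Finset.mem_filter.1 hj').2
      set j := (hall _ (star_char F hgl (hchar t))).choose with hjdef
      have hspec : μ j = starProd F (μ j') (μ t) :=
        (hall _ (star_char F hgl (hchar t))).choose_spec
      have hjk : μ j k ≠ 0 := by
        rw [hspec]
        simp only [starProd]
        exact div_ne_zero (mul_ne_zero (gl_ne F hgl k) (hTnv t ht)) (d_ne F k)
      have hrt : r j = t := runiq j hjk t ht ⟨μ j', hgl, hspec.symm⟩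
      simp only [Finset.mem_filter, hA, Finset.mem_univ, true_and]
      exact ⟨hjk, hrt⟩
    · intro a₁ ha₁ a₂ ha₂ heq
      have hgl₁ : IsGroupLike F (μ a₁) := (Finset.mem_filter.1 ha₁).2
      have hgl₂ : IsGroupLike F (μ a₂) := (Finset.mem_filter.1 ha₂).2
      have hs₁ : μ ((hall _ (star_char F hgl₁ (hchar t))).choose)
          = starProd F (μ a₁) (μ t) := (hall _ (star_char F hgl₁ (hchar t))).choose_spec
      have hs₂ : μ ((hall _ (star_char F hgl₂ (hchar t))).choose)
          = starProd F (μ a₂) (μ t) := (hall _ (star_char F hgl₂ (hchar t))).choose_spec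
      have heq2 : starProd F (μ a₁) (μ t) = starProd F (μ a₂) (μ t) := by
        rw [← hs₁, ← hs₂, heq]
      have heqk := congrFun heq2 k
      simp only [starProd] at heqk
      rw [div_eq_div_iff (d_ne F k) (d_ne F k)] at heqk
      have h1 : μ a₁ k = μ a₂ k := by
        have h2 := mul_right_cancel₀ (d_ne F k) heqk
        exact mul_right_cancel₀ (hTnv t ht) h2
      exact hinj (gl_ext F hgl₁ hgl₂ k hgen h1)
    · intro j hj
      simp only [Finset.mem_filter, hA, Finset.mem_univ, true_and] at hj
      obtain ⟨hjk, hrj⟩ := hj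
      obtain ⟨z, hz, hst⟩ := (rspec j hjk).2
      rw [hrj] at hst
      obtain ⟨a, ha⟩ := hall z hz.1
      have hgla : IsGroupLike F (μ a) := by rw [ha]; exact hz
      have hmem : a ∈ glS := Finset.mem_filter.mpr ⟨Finset.mem_univ a, hgla⟩
      refine ⟨a, hmem, ?_⟩
      have hs := (hall _ (star_char F ((Finset.mem_filter.1 hmem).2) (hchar t))).choose_spec
      apply hinj
      rw [hs, ha, hst]
  -- orbit counting identity
  have key2 : ∑ t ∈ T, (nG : ℝ) * g t = 1 := by
    rw [← h_total, ← h_fiber]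
    refine Finset.sum_congr rfl fun t ht => ?_
    rw [Finset.sum_congr rfl (hconst t ht), Finset.sum_const, hcard t ht,
      nsmul_eq_mul]
  have hnGR : ((nG : ℝ)) ≠ 0 := Nat.cast_ne_zero.mpr hnG_pos.ne'
  have key3 : ∑ t ∈ T, g t = 1 / (nG : ℝ) := by
    rw [← Finset.mul_sum] at key2
    field_simp at key2 ⊢
    linarith [key2]
  have real2 : ∑ t ∈ T, Complex.normSq (μ k t) = nfun k / (nG : ℝ) := by
    have hterm : ∀ t, Complex.normSq (μ k t) = nfun k * g t := by
      intro t
      rw [hg]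
      simp only []
      have h := htrans t k
      have hnt := (hn_pos t).ne'
      field_simp
      linarith [h]
    rw [Finset.sum_congr rfl fun t _ => hterm t, ← Finset.mul_sum, key3]
    field_simp
  -- the main equality
  have hterm2 : ∀ t, Smat k t / dims k = μ k t := by
    intro t
    rw [hEval t k, hSsymm]
  have hEq : dimC / ((Nat.card {j : Fin (m + 1) // IsGroupLike F (μ j)} : ℂ) * dims k ^ 2)
      = ∑ t ∈ T, (Smat k t / dims k) * starRingEnd ℂ (Smat k t / dims k) := by
    have hrhs : ∑ t ∈ T, (Smat k t / dims k) * starRingEnd ℂ (Smat k t / dims k)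
        = ((∑ t ∈ T, Complex.normSq (μ k t) : ℝ) : ℂ) := by
      push_cast
      refine Finset.sum_congr rfl fun t _ => ?_
      rw [hterm2 t, Complex.mul_conj]
    rw [hrhs, real2, ← hcd k, hcardG]
    have h2 : dims k ^ 2 ≠ 0 := pow_ne_zero _ (hdne k)
    have h3 : ((nG : ℂ)) ≠ 0 := Nat.cast_ne_zero.mpr hnG_pos.ne'
    push_cast
    field_simp
    ring
    rw [mul_assoc, mul_inv_cancel₀ (hdne k), mul_one]
  refine ⟨hEq, ?_⟩
  rw [hEq]
  apply IsIntegral.sum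
  intro t _
  exact (hSint t).mul ((hSint t).map (starRingEnd ℂ).toIntAlgHom)
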